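/- arXiv:2303.07867 — 4 statements merged into one kernel-verified Lean document; each statement's English description precedes it below -/
import Mathlib

section
/- If a real number x in [−q/(q+1), 1/(q+1)] has two distinct nega-q-ary digit sequences representing it, then x is nega-q-rational, i.e., one representation ends in the tail (q−1)0(q−1)0… and the other is obtained by decreasing one digit by 1 and appending the tail 0(q−1)0(q−1)…. -/
/-- The nega-`q`-ary value of a digit sequence `i : ℕ → ℕ`,
where `i k` is the digit at (1-based) position `k+1`. -/
noncomputable def negaVal (q : ℕ) (i : ℕ → ℕ) : ℝ :=
  ∑' k : ℕ, (i k : ℝ) / (-(q : ℝ)) ^ (k + 1)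

/-- `a` and `b` agree before position `m`, `b`'s `m`-th digit is one less than `a`'s,
`a` ends in the tail `(q-1) 0 (q-1) 0 …` and `b` ends in the tail `0 (q-1) 0 (q-1) …`
(starting at position `m+1`).  (Positions are 1-based; index `k` is position `k+1`.) -/
def TailPattern (q m : ℕ) (a b : ℕ → ℕ) : Prop :=
  1 ≤ m ∧ (∀ k, k < m - 1 → a k = b k) ∧ 1 ≤ a (m - 1) ∧ b (m - 1) = a (m - 1) - 1 ∧
    (∀ j : ℕ, a (m + j) = if Even j then q - 1 else 0) ∧
    (∀ j : ℕ, b (m + j) = if Even j then 0 else q - 1)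

/-- Summability of bounded numerators over powers of `r`, `1 < |r|`. -/
lemma summable_bounded_div_pow (r : ℝ) (hr : 1 < |r|) (f : ℕ → ℝ) (C : ℝ)
    (hf : ∀ k, |f k| ≤ C) : Summable fun k => f k / r ^ (k + 1) := by
  have hrpos : 0 < |r| := lt_trans one_pos hr
  have hinv : |r|⁻¹ < 1 := inv_lt_one_of_one_lt₀ hr
  have hgeom : Summable (fun k : ℕ => C * (|r|⁻¹) ^ k) :=
    (summable_geometric_of_lt_one (by positivity) hinv).mul_left C
  have hgeom' : Summable (fun k : ℕ => C * (|r|⁻¹) ^ (k + 1)) :=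
    (summable_nat_add_iff 1).mpr hgeom
  apply Summable.of_norm_bounded hgeom'
  intro k
  rw [norm_div, norm_pow, Real.norm_eq_abs, Real.norm_eq_abs, inv_pow, div_eq_mul_inv]
  exact mul_le_mul_of_nonneg_right (hf k) (by positivity)

lemma tsum_geom_aux (q : ℕ) (hq : 1 < q) :
    ∑' j : ℕ, ((q : ℝ) - 1) / (q : ℝ) ^ (j + 1) = 1 := by
  have hq1 : (1 : ℝ) < q := by exact_mod_cast hq
  have hq0 : (0 : ℝ) < q := lt_trans one_pos hq1
  have hqne : (q : ℝ) ≠ 0 := ne_of_gt hq0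
  have h : ∀ j : ℕ, ((q : ℝ) - 1) / (q : ℝ) ^ (j + 1)
      = (((q : ℝ) - 1) / q) * ((q : ℝ)⁻¹) ^ j := by
    intro j
    rw [pow_succ', div_mul_eq_div_div, div_eq_mul_inv (((q : ℝ) - 1) / q), ← inv_pow]
  rw [tsum_congr h, tsum_mul_left,
    tsum_geometric_of_lt_one (by positivity) (inv_lt_one_of_one_lt₀ hq1)]
  have h2 : (1 : ℝ) - (q : ℝ)⁻¹ = ((q : ℝ) - 1) / q := by field_simp
  rw [h2]
  exact mul_inv_cancel₀ (div_ne_zero (by linarith) hqne)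

/-- The key lemma: if the values agree, digits agree below `n`, and `b n < a n`,
then we get the tail pattern at `m = n + 1`. -/
lemma key_lemma (q : ℕ) (hq : 1 < q) (a b : ℕ → ℕ) (ha : ∀ k, a k < q) (hb : ∀ k, b k < q)
    (hv : negaVal q a = negaVal q b) (n : ℕ) (hagree : ∀ k, k < n → a k = b k)
    (hd : b n < a n) : TailPattern q (n + 1) a b := by
  have hq1 : (1 : ℝ) < q := by exact_mod_cast hq
  have hq0 : (0 : ℝ) < q := lt_trans one_pos hq1
  have hqne : (q : ℝ) ≠ 0 := ne_of_gt hq0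
  have hnqne : (-(q : ℝ)) ≠ 0 := neg_ne_zero.mpr hqne
  have hrabs : 1 < |(-(q : ℝ))| := by rw [abs_neg, abs_of_pos hq0]; exact hq1
  have hqabs : 1 < |(q : ℝ)| := by rw [abs_of_pos hq0]; exact hq1
  have hbound : ∀ i : ℕ → ℕ, (∀ k, i k < q) → ∀ k, |(i k : ℝ)| ≤ (q : ℝ) - 1 := by
    intro i hi k
    rw [abs_of_nonneg (Nat.cast_nonneg _)]
    have : (i k : ℝ) + 1 ≤ (q : ℝ) := by exact_mod_cast Nat.succ_le_of_lt (hi k)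
    linarith
  have hsa : Summable (fun k => (a k : ℝ) / (-(q : ℝ)) ^ (k + 1)) :=
    summable_bounded_div_pow _ hrabs _ _ (hbound a ha)
  have hsb : Summable (fun k => (b k : ℝ) / (-(q : ℝ)) ^ (k + 1)) :=
    summable_bounded_div_pow _ hrabs _ _ (hbound b hb)
  set F : ℕ → ℝ := fun k => ((a k : ℝ) - b k) / (-(q : ℝ)) ^ (k + 1) with hF
  have hdiffbound : ∀ k, |(a k : ℝ) - b k| ≤ (q : ℝ) - 1 := by
    intro k
    have h1 := hbound a ha k
    have h2 := hbound b hb k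
    rw [abs_of_nonneg (Nat.cast_nonneg _)] at h1 h2
    have h3 : (0 : ℝ) ≤ a k := Nat.cast_nonneg _
    have h4 : (0 : ℝ) ≤ b k := Nat.cast_nonneg _
    rw [abs_sub_le_iff]
    constructor <;> linarith
  have hsF : Summable F := summable_bounded_div_pow _ hrabs _ _ hdiffbound
  have htF : ∑' k, F k = 0 := by
    have h : ∀ k, F k = (a k : ℝ) / (-(q : ℝ)) ^ (k + 1) - (b k : ℝ) / (-(q : ℝ)) ^ (k + 1) := by
      intro k; simp only [hF]; ring
    rw [tsum_congr h, Summable.tsum_sub hsa hsb]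
    have : negaVal q a - negaVal q b = 0 := by rw [hv]; ring
    exact this
  have hsplit := Summable.sum_add_tsum_nat_add (n + 1) hsF
  rw [htF] at hsplit
  have hfin : ∑ i ∈ Finset.range (n + 1), F i = F n := by
    rw [Finset.sum_range_succ]
    have h0 : ∑ i ∈ Finset.range n, F i = 0 := by
      apply Finset.sum_eq_zero
      intro i hi
      simp only [hF]
      simp [hagree i (Finset.mem_range.mp hi)]
    rw [h0, zero_add]
  rw [hfin] at hsplit
  -- hsplit : F n + ∑' i, F (i + (n+1)) = 0
  set d : ℝ := (a n : ℝ) - b n with hdd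
  have hd1 : (1 : ℝ) ≤ d := by
    rw [hdd]
    have : (b n : ℝ) + 1 ≤ a n := by exact_mod_cast Nat.succ_le_of_lt hd
    linarith
  set G : ℕ → ℝ := fun j => ((a (n + 1 + j) : ℝ) - b (n + 1 + j)) * (-1 : ℝ) ^ j
      / (q : ℝ) ^ (j + 1) with hG
  have hGbound : ∀ k, |((a (n + 1 + k) : ℝ) - b (n + 1 + k)) * (-1 : ℝ) ^ k| ≤ (q : ℝ) - 1 := by
    intro k
    rw [abs_mul, abs_pow, abs_neg, abs_one, one_pow, mul_one]
    exact hdiffbound _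
  have hsG : Summable G := summable_bounded_div_pow _ hqabs _ _ hGbound
  -- show d = ∑' G
  have hpt : ∀ i : ℕ, -((-(q : ℝ)) ^ (n + 1) * F (i + (n + 1))) = G i := by
    intro i
    have hden : (-(q : ℝ)) ^ (i + (n + 1) + 1)
        = (-(q : ℝ)) ^ (n + 1) * ((-1 : ℝ) ^ (i + 1) * (q : ℝ) ^ (i + 1)) := by
      rw [show i + (n + 1) + 1 = (n + 1) + (i + 1) from by ring, pow_add,
        neg_pow ((q : ℝ)) (i + 1)]
    have harg : n + 1 + i = i + (n + 1) := by ring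
    simp only [hF, hG, harg, hden]
    have hne1 : (-(q : ℝ)) ^ (n + 1) ≠ 0 := pow_ne_zero _ hnqne
    have hne2 : ((q : ℝ)) ^ (i + 1) ≠ 0 := pow_ne_zero _ hqne
    rcases Nat.even_or_odd i with hi | hi
    · rw [hi.neg_one_pow, hi.add_one.neg_one_pow]
      field_simp
    · rw [hi.neg_one_pow, hi.add_one.neg_one_pow]
      field_simp
  have hdG : d = ∑' j, G j := by
    have hFn : F n = d / (-(q : ℝ)) ^ (n + 1) := rfl
    have hne1 : (-(q : ℝ)) ^ (n + 1) ≠ 0 := pow_ne_zero _ hnqne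
    have h2 : d = -((-(q : ℝ)) ^ (n + 1) * ∑' i, F (i + (n + 1))) := by
      have h3 : F n = -∑' i, F (i + (n + 1)) := by linarith
      have h4 : d = (-(q : ℝ)) ^ (n + 1) * F n := by
        rw [hFn]; field_simp
      rw [h4, h3]; ring
    rw [h2, ← tsum_mul_left, ← tsum_neg]
    exact tsum_congr hpt
  set u : ℕ → ℝ := fun j => ((q : ℝ) - 1) / (q : ℝ) ^ (j + 1) - G j with hu
  have hsgeo : Summable (fun j : ℕ => ((q : ℝ) - 1) / (q : ℝ) ^ (j + 1)) := by
    apply summable_bounded_div_pow _ hqabs _ ((q : ℝ) - 1)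
    intro k
    exact le_of_eq (abs_of_nonneg (by linarith))
  have hsu : Summable u := hsgeo.sub hsG
  have hupos : ∀ j, 0 ≤ u j := by
    intro j
    simp only [hu, sub_nonneg, hG]
    refine (div_le_div_iff_of_pos_right (by positivity)).mpr ?_
    exact le_trans (le_abs_self _) (hGbound j)
  have htu : ∑' j, u j = 1 - d := by
    simp only [hu]
    rw [Summable.tsum_sub hsgeo hsG, tsum_geom_aux q hq, ← hdG]
  have htu0 : ∑' j, u j = 0 := by
    have h1 : 0 ≤ ∑' j, u j := tsum_nonneg hupos
    have h2 : ∑' j, u j ≤ 0 := by rw [htu]; linarith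
    linarith
  have hdeq : d = 1 := by rw [htu] at htu0; linarith
  have huj : ∀ j, u j = 0 := by
    intro j
    have h1 := Summable.le_tsum hsu j (fun i _ => hupos i)
    have h2 := hupos j
    rw [htu0] at h1
    linarith
  have hGj : ∀ j, ((a (n + 1 + j) : ℝ) - b (n + 1 + j)) * (-1 : ℝ) ^ j = (q : ℝ) - 1 := by
    intro j
    have h1 := huj j
    simp only [hu, sub_eq_zero] at h1
    have h3 : ((a (n + 1 + j) : ℝ) - b (n + 1 + j)) * (-1 : ℝ) ^ j / (q : ℝ) ^ (j + 1)
        = ((q : ℝ) - 1) / (q : ℝ) ^ (j + 1) := by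
      simp only [hG] at h1
      exact h1.symm
    have hne : ((q : ℝ)) ^ (j + 1) ≠ 0 := pow_ne_zero _ hqne
    have h4 := congrArg (· * (q : ℝ) ^ (j + 1)) h3
    simpa [div_mul_cancel₀, hne] using h4
  have hdigit : ∀ j : ℕ, (a (n + 1 + j) = if Even j then q - 1 else 0)
      ∧ (b (n + 1 + j) = if Even j then 0 else q - 1) := by
    intro j
    have h4 := ha (n + 1 + j)
    have h5 := hb (n + 1 + j)
    rcases Nat.even_or_odd j with hj | hj
    · have h1 := hGj j
      rw [hj.neg_one_pow, mul_one] at h1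
      have h2 : (a (n + 1 + j) : ℝ) + 1 = (b (n + 1 + j) : ℝ) + q := by linarith
      have h3 : a (n + 1 + j) + 1 = b (n + 1 + j) + q := by exact_mod_cast h2
      simp only [if_pos hj]
      omega
    · have h1 := hGj j
      rw [hj.neg_one_pow, mul_neg_one] at h1
      have h2 : (b (n + 1 + j) : ℝ) + 1 = (a (n + 1 + j) : ℝ) + q := by linarith
      have h3 : b (n + 1 + j) + 1 = a (n + 1 + j) + q := by exact_mod_cast h2
      simp only [if_neg (Nat.not_even_iff_odd.mpr hj)]
      omega
  have hdn : a n = b n + 1 := by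
    have h1 : (a n : ℝ) = (b n : ℝ) + 1 := by rw [hdd] at hdeq; linarith
    exact_mod_cast h1
  refine ⟨Nat.le_add_left 1 n, ?_, ?_, ?_, ?_, ?_⟩
  · intro k hk
    simp only [Nat.add_sub_cancel] at hk
    exact hagree k hk
  · simp only [Nat.add_sub_cancel]; omega
  · simp only [Nat.add_sub_cancel]; omega
  · intro j; exact (hdigit j).1
  · intro j; exact (hdigit j).2

theorem two_distinct_representations_implies_nega_q_rational
    (q : ℕ) (hq : 1 < q) (x : ℝ)
    (hx : x ∈ Set.Icc (-(q : ℝ) / ((q : ℝ) + 1)) (1 / ((q : ℝ) + 1)))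
    (a b : ℕ → ℕ) (ha : ∀ k, a k < q) (hb : ∀ k, b k < q)
    (hav : negaVal q a = x) (hbv : negaVal q b = x) (hab : a ≠ b) :
    ∃ m : ℕ, TailPattern q m a b ∨ TailPattern q m b a := by
  have hex : ∃ k, a k ≠ b k := Function.ne_iff.mp hab
  set n := Nat.find hex with hn
  have hne : a n ≠ b n := Nat.find_spec hex
  have hagree : ∀ k, k < n → a k = b k := by
    intro k hk
    by_contra h
    have h2 : Nat.find hex ≤ k := Nat.find_le h
    omega
  have hv : negaVal q a = negaVal q b := hav.trans hbv.symm
  rcases Nat.lt_or_ge (b n) (a n) with h | h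
  · exact ⟨n + 1, Or.inl (key_lemma q hq a b ha hb hv n hagree h)⟩
  · have h' : a n < b n := lt_of_le_of_ne h hne
    exact ⟨n + 1, Or.inr (key_lemma q hq b a hb ha hv.symm n
      (fun k hk => (hagree k hk).symm) h')⟩
end

section
/- Let q > 1 be an integer, p_0,…,p_{q−1} ∈ (−1,1) with ∑_j p_j = 1, β_0 = 0, β_i = ∑_{j<i} p_j, and (n_k) a bijective enumeration of the positive integers. Suppose f is a bounded function on digit sequences satisfying the system f(s) = β̈_{s(n_1)} + p̈_{s(n_1)}·f(delete_{n_1}(s)) and more generally, for all k, f applied to the sequence with digits at positions n_1,…,n_{k−1} deleted equals β̈_{i_{n_k}} + p̈_{i_{n_k}} times f of the sequence with digits at positions n_1,…,n_k deleted. Then f(s) = β̈_{i_{n_1}} + ∑_{k=2}^∞ (β̈_{i_{n_k}} ∏_{r=1}^{k−1} p̈_{i_{n_r}}), and this solution is unique among bounded functions. -/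
/-- `β_i = p_0 + … + p_{i-1}` (so `β_0 = 0`). -/
noncomputable def beta (p : ℕ → ℝ) (i : ℕ) : ℝ := ∑ j ∈ Finset.range i, p j

/-- Parity-modified `β̈`. -/
noncomputable def ddBeta (q : ℕ) (p : ℕ → ℝ) (i pos : ℕ) : ℝ :=
  if Even pos then beta p i else beta p (q - 1 - i)

/-- Parity-modified `p̈`. -/
noncomputable def ddP (q : ℕ) (p : ℕ → ℝ) (i pos : ℕ) : ℝ :=
  if Even pos then p i else p (q - 1 - i)

/-- The digit sequence remaining after the entries of `s` at the (1-based)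
positions `n 0, n 1, …, n (k-1)` have been deleted (in the paper's notation,
`σ_{\hat n_k} ∘ ⋯ ∘ σ_{\hat n_1}` applied to `s`).  Index `j` of the result is
the `j`-th surviving entry. -/
noncomputable def surv (n : ℕ → ℕ) (k : ℕ) (s : ℕ → ℕ) : ℕ → ℕ :=
  fun j => s (Nat.nth (fun m => ∀ r < k, n r ≠ m + 1) j)

/-- The system of functional equations
`f(σ_{\hat n_{k-1}} ∘ ⋯ ∘ σ_{\hat n_1}(x)) = β̈_{i_{n_k}} + p̈_{i_{n_k}} · f(σ_{\hat n_k} ∘ ⋯ ∘ σ_{\hat n_1}(x))`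
has the series `β̈_{i_{n_1}} + ∑_{k≥2} β̈_{i_{n_k}} ∏_{r<k} p̈_{i_{n_r}}` as its
unique bounded solution. -/
theorem functional_system_unique_bounded_solution
    (q : ℕ) (hq : 1 < q) (p : ℕ → ℝ)
    (hp : ∀ j < q, p j ∈ Set.Ioo (-1 : ℝ) 1)
    (hps : ∑ j ∈ Finset.range q, p j = 1)
    (n : ℕ → ℕ) (hn1 : ∀ k, 1 ≤ n k) (hninj : Function.Injective n)
    (hnsurj : ∀ m, 1 ≤ m → ∃ k, n k = m)
    (f : (ℕ → ℕ) → ℝ) (M : ℝ)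
    (hbd : ∀ s : ℕ → ℕ, (∀ k, s k < q) → |f s| ≤ M)
    (heq : ∀ s : ℕ → ℕ, (∀ k, s k < q) → ∀ k : ℕ,
      f (surv n k s) =
        ddBeta q p (s (n k - 1)) (n k) +
          ddP q p (s (n k - 1)) (n k) * f (surv n (k + 1) s)) :
    ∀ s : ℕ → ℕ, (∀ k, s k < q) →
      f s = ∑' k : ℕ,
        ddBeta q p (s (n k - 1)) (n k) *
          ∏ r ∈ Finset.range k, ddP q p (s (n r - 1)) (n r) := by

  intro s hs
  set a : ℕ → ℝ := fun k => ddBeta q p (s (n k - 1)) (n k) with ha_def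
  set d : ℕ → ℝ := fun k => ddP q p (s (n k - 1)) (n k) with hd_def
  -- a bound c < 1 for the |p j|, j < q
  obtain ⟨c, hc0, hc1, hcb⟩ : ∃ c : ℝ, 0 ≤ c ∧ c < 1 ∧ ∀ j < q, |p j| ≤ c := by
    have hne : (Finset.range q).Nonempty := ⟨0, Finset.mem_range.mpr (by omega)⟩
    refine ⟨(Finset.range q).sup' hne (fun j => |p j|), ?_, ?_, ?_⟩
    · have h0 : (0:ℕ) ∈ Finset.range q := Finset.mem_range.mpr (by omega)
      exact le_trans (abs_nonneg (p 0)) (Finset.le_sup' (fun j => |p j|) h0)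
    · rw [Finset.sup'_lt_iff]
      intro j hj
      obtain ⟨h1, h2⟩ := hp j (Finset.mem_range.mp hj)
      exact abs_lt.mpr ⟨h1, h2⟩
    · intro j hj
      exact Finset.le_sup' (fun j => |p j|) (Finset.mem_range.mpr hj)
  have hM0 : 0 ≤ M := le_trans (abs_nonneg _) (hbd (fun _ => 0) (fun _ => by show 0 < q; omega))
  have hd : ∀ k, |d k| ≤ c := by
    intro k
    rw [hd_def]
    simp only [ddP]
    split
    · exact hcb _ (hs _)
    · exact hcb _ (by omega)
  have hbeta : ∀ i < q, |beta p i| ≤ (q : ℝ) := by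
    intro i hi
    calc |beta p i| ≤ ∑ j ∈ Finset.range i, |p j| := Finset.abs_sum_le_sum_abs _ _
      _ ≤ ∑ _j ∈ Finset.range i, (1 : ℝ) := by
          refine Finset.sum_le_sum ?_
          intro j hj
          have := hp j (by have := Finset.mem_range.mp hj; omega)
          exact le_of_lt (abs_lt.mpr ⟨this.1, this.2⟩)
      _ = (i : ℝ) := by simp
      _ ≤ (q : ℝ) := by exact_mod_cast hi.le
  have ha : ∀ k, |a k| ≤ (q : ℝ) := by
    intro k
    rw [ha_def]
    simp only [ddBeta]
    split
    · exact hbeta _ (hs _)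
    · exact hbeta _ (by omega)
  have hP : ∀ K, |∏ r ∈ Finset.range K, d r| ≤ c ^ K := by
    intro K
    rw [Finset.abs_prod]
    calc ∏ r ∈ Finset.range K, |d r| ≤ ∏ _r ∈ Finset.range K, c :=
          Finset.prod_le_prod (fun _ _ => abs_nonneg _) (fun r _ => hd r)
      _ = c ^ K := by simp
  -- surv n 0 s = s
  have hsurv0 : surv n 0 s = s := by
    funext j
    haveI : DecidablePred (fun m => ∀ r < 0, n r ≠ m + 1) := fun m => inferInstance
    have hcount : Nat.count (fun m => ∀ r < 0, n r ≠ m + 1) j = j := by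
      rw [Nat.count_eq_card_filter_range, Finset.filter_true_of_mem, Finset.card_range]
      intro m _ r hr
      omega
    have := Nat.nth_count (p := fun m => ∀ r < 0, n r ≠ m + 1) (n := j)
      (fun r hr => absurd hr (Nat.not_lt_zero r))
    rw [hcount] at this
    simp [surv, this]
  -- telescoping identity
  have htel : ∀ K, f s = (∑ k ∈ Finset.range K, a k * ∏ r ∈ Finset.range k, d r)
      + (∏ r ∈ Finset.range K, d r) * f (surv n K s) := by
    intro K
    induction K with
    | zero => simp [hsurv0]
    | succ K ih =>
      rw [ih, heq s hs K, Finset.sum_range_succ, Finset.prod_range_succ]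
      rw [ha_def, hd_def]
      ring
  -- summability
  have hsum : Summable (fun k => a k * ∏ r ∈ Finset.range k, d r) := by
    refine Summable.of_norm_bounded (g := fun k => (q : ℝ) * c ^ k)
      ((summable_geometric_of_lt_one hc0 hc1).mul_left _) ?_
    intro k
    rw [Real.norm_eq_abs, abs_mul]
    exact mul_le_mul (ha k) (hP k) (abs_nonneg _) (by positivity)
  -- the tail tends to 0
  have htail : Filter.Tendsto (fun K => (∏ r ∈ Finset.range K, d r) * f (surv n K s))
      Filter.atTop (nhds 0) := by
    have hmain : Filter.Tendsto (fun K : ℕ => c ^ K * M) Filter.atTop (nhds 0) := by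
      have := (tendsto_pow_atTop_nhds_zero_of_lt_one hc0 hc1).mul_const M
      simpa using this
    refine squeeze_zero_norm (fun K => ?_) hmain
    rw [Real.norm_eq_abs, abs_mul]
    have hbK : |f (surv n K s)| ≤ M := hbd _ (fun j => hs _)
    exact mul_le_mul (hP K) hbK (abs_nonneg _) (by positivity)
  have hps' : Filter.Tendsto (fun K => ∑ k ∈ Finset.range K, a k * ∏ r ∈ Finset.range k, d r)
      Filter.atTop (nhds (f s)) := by
    have : (fun K => ∑ k ∈ Finset.range K, a k * ∏ r ∈ Finset.range k, d r)
        = fun K => f s - (∏ r ∈ Finset.range K, d r) * f (surv n K s) := by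
      funext K
      have := htel K
      linarith
    rw [this]
    simpa using (tendsto_const_nhds (x := f s)).sub htail
  exact tendsto_nhds_unique hps' hsum.hasSum.tendsto_sum_nat
end

section
/- Let q > 1, p_0,…,p_{q−1} > 0 with ∑ p_j = 1, and let h be the generalized Salem function defined on digit sequences by h((i_k)) = β̈_{i_{n_1}} + ∑_{k=2}^∞ (β̈_{i_{n_k}} ∏_{r=1}^{k−1} p̈_{i_{n_r}}), with (n_k) a bijective enumeration of ℕ. If x_0 ∈ [−q/(q+1), 1/(q+1)] has a unique nega-q-ary representation (is nega-q-irrational), then h (regarded as a function of the real number x via its nega-q representation) is continuous at x_0. -/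
/-- The generalized Salem series of a digit sequence `i`, for the enumeration
`n` of the positive integers (`n k` is the paper's `n_{k+1}`). -/
noncomputable def salemVal (q : ℕ) (p : ℕ → ℝ) (n : ℕ → ℕ) (i : ℕ → ℕ) : ℝ :=
  ∑' k : ℕ,
    ddBeta q p (i (n k - 1)) (n k) *
      ∏ r ∈ Finset.range k, ddP q p (i (n r - 1)) (n r)

/-! ### Auxiliary lemmas -/

/-- The nega-`q` value, as a function on `ℕ → Fin q`, is continuous. -/
lemma continuous_negaVal_fin (q : ℕ) (hq : 1 < q) :
    Continuous (fun f : ℕ → Fin q => negaVal q (fun k => (f k : ℕ))) := by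
  have hq0 : (0 : ℝ) < q := by exact_mod_cast (by omega : 0 < q)
  unfold negaVal
  apply continuous_tsum (u := fun k => (1 / (q : ℝ)) ^ k)
  · intro k
    exact (continuous_of_discreteTopology
      (f := fun m : Fin q => ((m : ℕ) : ℝ) / (-(q : ℝ)) ^ (k + 1))).comp (continuous_apply k)
  · exact summable_geometric_of_lt_one (by positivity) (by
      rw [div_lt_one hq0]; exact_mod_cast hq)
  · intro k f
    have h1 : |(-(q : ℝ)) ^ (k + 1)| = (q : ℝ) ^ (k + 1) := by
      rw [abs_pow, abs_neg, abs_of_nonneg hq0.le]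
    rw [Real.norm_eq_abs, abs_div, h1, abs_of_nonneg (by positivity)]
    rw [div_le_iff₀ (by positivity)]
    have h2 : ((f k : ℕ) : ℝ) ≤ (q : ℝ) := by
      exact_mod_cast (f k).isLt.le
    calc ((f k : ℕ) : ℝ) ≤ (q : ℝ) := h2
      _ = (1 / (q : ℝ)) ^ k * (q : ℝ) ^ (k + 1) := by
          rw [one_div, inv_pow, pow_succ]
          field_simp

/-- Bounds on `ddBeta` and `ddP` for digits below `q`. -/
lemma ddBeta_bounds (q : ℕ) (p : ℕ → ℝ) (hp : ∀ j < q, 0 < p j)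
    (hps : ∑ j ∈ Finset.range q, p j = 1) {i : ℕ} (hi : i < q) (pos : ℕ) :
    0 ≤ ddBeta q p i pos ∧ ddBeta q p i pos ≤ 1 := by
  have key : ∀ i' < q, 0 ≤ beta p i' ∧ beta p i' ≤ 1 := by
    intro i' hi'
    constructor
    · exact Finset.sum_nonneg fun j hj => (hp j (lt_of_lt_of_le (Finset.mem_range.1 hj) hi'.le)).le
    · rw [beta, ← hps]
      exact Finset.sum_le_sum_of_subset_of_nonneg
        (Finset.range_subset_range.2 hi'.le)
        (fun j hj _ => (hp j (Finset.mem_range.1 hj)).le)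
  unfold ddBeta
  split
  · exact key i hi
  · exact key _ (by omega)

lemma ddP_pos (q : ℕ) (p : ℕ → ℝ) (hp : ∀ j < q, 0 < p j) (hq : 1 < q)
    {i : ℕ} (hi : i < q) (pos : ℕ) : 0 < ddP q p i pos := by
  unfold ddP
  split
  · exact hp i hi
  · exact hp _ (by omega)

/-- There is a uniform bound `P < 1` on the `p j`'s. -/
lemma exists_P (q : ℕ) (hq : 1 < q) (p : ℕ → ℝ) (hp : ∀ j < q, 0 < p j)
    (hps : ∑ j ∈ Finset.range q, p j = 1) :
    ∃ P : ℝ, 0 ≤ P ∧ P < 1 ∧ ∀ j < q, p j ≤ P := by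
  refine ⟨1 - min (p 0) (p 1), ?_, ?_, ?_⟩
  · have h01 : p 0 ≤ 1 := by
      rw [← hps]
      exact Finset.single_le_sum (f := p)
        (fun j hj => (hp j (Finset.mem_range.1 hj)).le) (Finset.mem_range.2 (by omega))
    have h11 : p 1 ≤ 1 := by
      rw [← hps]
      exact Finset.single_le_sum (f := p)
        (fun j hj => (hp j (Finset.mem_range.1 hj)).le) (Finset.mem_range.2 hq)
    have := min_le_left (p 0) (p 1)
    linarith
  · have := lt_min (hp 0 (by omega)) (hp 1 hq)
    linarith
  · intro j hj
    have key : ∀ j' < q, ∀ j'' < q, j' ≠ j'' → p j' ≤ 1 - p j'' := by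
      intro j' hj' j'' hj'' hne
      have : p j' + p j'' ≤ ∑ i ∈ Finset.range q, p i := by
        have : p j' + p j'' = ∑ i ∈ ({j', j''} : Finset ℕ), p i := by
          rw [Finset.sum_pair hne]
        rw [this]
        apply Finset.sum_le_sum_of_subset_of_nonneg
        · intro i hi
          simp only [Finset.mem_insert, Finset.mem_singleton] at hi
          rcases hi with h | h <;> simp [Finset.mem_range, h, hj', hj'']
        · exact fun i hi _ => (hp i (Finset.mem_range.1 hi)).le
      rw [hps] at this; linarith
    rcases eq_or_ne j 0 with h0 | h0
    · have := key j hj 1 hq (by omega)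
      have := min_le_right (p 0) (p 1)
      linarith
    · have := key j hj 0 (by omega) h0
      have := min_le_left (p 0) (p 1)
      linarith

/-- The Salem value, as a function on `ℕ → Fin q`, is continuous. -/
lemma continuous_salemVal_fin (q : ℕ) (hq : 1 < q) (p : ℕ → ℝ)
    (hp : ∀ j < q, 0 < p j) (hps : ∑ j ∈ Finset.range q, p j = 1)
    (n : ℕ → ℕ) :
    Continuous (fun f : ℕ → Fin q => salemVal q p n (fun k => (f k : ℕ))) := by
  obtain ⟨P, hP0, hP1, hPle⟩ := exists_P q hq p hp hps
  unfold salemVal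
  apply continuous_tsum (u := fun k => P ^ k)
  · intro k
    apply Continuous.mul
    · exact (continuous_of_discreteTopology
        (f := fun m : Fin q => ddBeta q p (m : ℕ) (n k))).comp (continuous_apply (n k - 1))
    · apply continuous_finset_prod
      intro r _
      exact (continuous_of_discreteTopology
        (f := fun m : Fin q => ddP q p (m : ℕ) (n r))).comp (continuous_apply (n r - 1))
  · exact summable_geometric_of_lt_one hP0 hP1
  · intro k f
    have hb := ddBeta_bounds q p hp hps (f (n k - 1)).isLt (n k)
    have hprod0 : 0 ≤ ∏ r ∈ Finset.range k, ddP q p ((f (n r - 1) : ℕ)) (n r) :=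
      Finset.prod_nonneg fun r _ => (ddP_pos q p hp hq (f (n r - 1)).isLt (n r)).le
    have hprodP : ∏ r ∈ Finset.range k, ddP q p ((f (n r - 1) : ℕ)) (n r) ≤ P ^ k := by
      calc ∏ r ∈ Finset.range k, ddP q p ((f (n r - 1) : ℕ)) (n r)
          ≤ ∏ _r ∈ Finset.range k, P := by
            apply Finset.prod_le_prod
            · exact fun r _ => (ddP_pos q p hp hq (f (n r - 1)).isLt (n r)).le
            · intro r _
              unfold ddP
              split
              · exact hPle _ (f (n r - 1)).isLt
              · exact hPle _ (by have := (f (n r - 1)).isLt; omega)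
        _ = P ^ k := by rw [Finset.prod_const, Finset.card_range]
    rw [Real.norm_eq_abs, abs_mul, abs_of_nonneg hb.1, abs_of_nonneg hprod0]
    calc ddBeta q p ((f (n k - 1) : ℕ)) (n k) *
          ∏ r ∈ Finset.range k, ddP q p ((f (n r - 1) : ℕ)) (n r)
        ≤ 1 * P ^ k := mul_le_mul hb.2 hprodP hprod0 zero_le_one
      _ = P ^ k := one_mul _

/-- If `x₀ ∈ [−q/(q+1), 1/(q+1)]` has a unique nega-`q`-ary representation,
then the generalized Salem function (regarded as a function of a real number via
any choice `D` of nega-`q` representations) is continuous at `x₀` within the interval. -/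
theorem salem_continuous_at_nega_q_irrational
    (q : ℕ) (hq : 1 < q) (p : ℕ → ℝ)
    (hp : ∀ j < q, 0 < p j)
    (hps : ∑ j ∈ Finset.range q, p j = 1)
    (n : ℕ → ℕ) (hn1 : ∀ k, 1 ≤ n k) (hninj : Function.Injective n)
    (hnsurj : ∀ m, 1 ≤ m → ∃ k, n k = m)
    (D : ℝ → ℕ → ℕ)
    (hD : ∀ x ∈ Set.Icc (-(q : ℝ) / ((q : ℝ) + 1)) (1 / ((q : ℝ) + 1)),
      (∀ k, D x k < q) ∧ negaVal q (D x) = x)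
    (x₀ : ℝ) (hx₀ : x₀ ∈ Set.Icc (-(q : ℝ) / ((q : ℝ) + 1)) (1 / ((q : ℝ) + 1)))
    (huniq : ∀ j : ℕ → ℕ, (∀ k, j k < q) → negaVal q j = x₀ → j = D x₀) :
    ContinuousWithinAt (fun x => salemVal q p n (D x))
      (Set.Icc (-(q : ℝ) / ((q : ℝ) + 1)) (1 / ((q : ℝ) + 1))) x₀ := by
  set s : Set ℝ := Set.Icc (-(q : ℝ) / ((q : ℝ) + 1)) (1 / ((q : ℝ) + 1)) with hs
  have hq0 : 0 < q := (by omega : 0 < q)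
  -- the digit map into the compact space `ℕ → Fin q`
  set d : ℝ → (ℕ → Fin q) := fun x k => ⟨D x k % q, Nat.mod_lt _ hq0⟩ with hd
  have hdcoe : ∀ x ∈ s, ∀ k, ((d x k : ℕ)) = D x k := by
    intro x hx k
    exact Nat.mod_eq_of_lt ((hD x hx).1 k)
  set F : (ℕ → Fin q) → ℝ := fun f => negaVal q (fun k => (f k : ℕ)) with hF
  set G : (ℕ → Fin q) → ℝ := fun f => salemVal q p n (fun k => (f k : ℕ)) with hG
  have hFc : Continuous F := continuous_negaVal_fin q hq
  have hGc : Continuous G := continuous_salemVal_fin q hq p hp hps n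
  -- key: the digit map tends to `d x₀` within `s`
  have hkey : Filter.Tendsto d (nhdsWithin x₀ s) (nhds (d x₀)) := by
    rw [tendsto_nhds]
    intro U hU hxU
    -- compact complement
    have hKcpt : IsCompact Uᶜ := hU.isClosed_compl.isCompact
    have hCcpt : IsCompact (F '' Uᶜ) := hKcpt.image hFc
    have hCclosed : IsClosed (F '' Uᶜ) := hCcpt.isClosed
    have hx₀notC : x₀ ∉ F '' Uᶜ := by
      rintro ⟨f, hfK, hfx⟩
      have hjlt : ∀ k, (fun k => ((f k : ℕ))) k < q := fun k => (f k).isLt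
      have := huniq (fun k => (f k : ℕ)) hjlt hfx
      have hfeq : f = d x₀ := by
        funext k
        apply Fin.ext
        have h1 : ((f k : ℕ)) = D x₀ k := congrFun this k
        rw [h1]
        exact (hdcoe x₀ hx₀ k).symm
      exact hfK (hfeq ▸ hxU)
    obtain ⟨ε, hε, hball⟩ := Metric.isOpen_iff.1 hCclosed.isOpen_compl x₀ hx₀notC
    have h1 : ∀ᶠ x in nhdsWithin x₀ s, dist x x₀ < ε :=
      Filter.Eventually.filter_mono nhdsWithin_le_nhds
        (Metric.ball_mem_nhds x₀ hε)
    have h2 : ∀ᶠ x in nhdsWithin x₀ s, x ∈ s := eventually_mem_nhdsWithin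
    filter_upwards [h1, h2] with x hxε hxs
    by_contra hxin
    have hFdx : F (d x) = x := by
      have : (fun k => ((d x k : ℕ))) = D x := funext (hdcoe x hxs)
      rw [hF]
      simp only []
      rw [this]
      exact (hD x hxs).2
    have : x ∈ F '' Uᶜ := ⟨d x, hxin, hFdx⟩
    exact (hball (Metric.mem_ball.2 hxε)) this
  -- compose with continuity of `G`
  have hcomp : Filter.Tendsto (fun x => G (d x)) (nhdsWithin x₀ s) (nhds (G (d x₀))) :=
    (hGc.tendsto _).comp hkey
  have heq : ∀ x ∈ s, G (d x) = salemVal q p n (D x) := by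
    intro x hx
    rw [hG]
    simp only []
    congr 1
    exact funext (hdcoe x hx)
  have heq₀ : G (d x₀) = salemVal q p n (D x₀) := heq x₀ hx₀
  rw [ContinuousWithinAt]
  rw [← heq₀]
  apply hcomp.congr'
  filter_upwards [eventually_mem_nhdsWithin] with x hx
  exact heq x hx
end

section
/- Let q > 1 and p_0,…,p_{q−1} ∈ [0,1] with ∑ p_j = 1, and suppose some p_{j_0} = 0. Then the generalized Salem function h (for the identity sequence n_k = k) is constant on every cylinder Λ^{−q}_{c_1…c_r} whose base contains a digit c_m with p̈_{c_m} = 0; consequently h is locally constant almost everywhere on [−q/(q+1), 1/(q+1)] with respect to Lebesgue measure. -/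
open MeasureTheory

/-- The Salem series for the identity enumeration `n_k = k`. -/
noncomputable def salemId (q : ℕ) (p : ℕ → ℝ) (i : ℕ → ℕ) : ℝ :=
  ∑' k : ℕ, ddBeta q p (i k) (k + 1) * ∏ r ∈ Finset.range k, ddP q p (i r) (r + 1)


-- Auxiliary definitions and lemmas --

open Finset
open scoped ENNReal

noncomputable def pref (q : ℕ) (i : ℕ → ℕ) (r : ℕ) : ℝ :=
  ∑ k ∈ range r, (i k : ℝ) / (-(q : ℝ)) ^ (k + 1)

def zpre (q : ℕ) (i : ℕ → ℕ) (r : ℕ) : ℤ :=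
  ∑ k ∈ range r, (i k : ℤ) * (-(q : ℤ)) ^ (r - 1 - k)

lemma nega_summable {q : ℕ} (hq : 1 < q) {i : ℕ → ℕ} (hi : ∀ k, i k < q) :
    Summable (fun k : ℕ => (i k : ℝ) / (-(q : ℝ)) ^ (k + 1)) := by
  have hq0 : (0:ℝ) < q := by positivity
  have hr : (0:ℝ) ≤ 1/q := by positivity
  have hr1 : (1:ℝ)/q < 1 := by
    rw [div_lt_one hq0]; exact_mod_cast hq
  have hs : Summable (fun k : ℕ => (q:ℝ) * ((1/q) ^ (k+1))) := by
    have := (summable_geometric_of_lt_one hr hr1).mul_left ((q:ℝ) * (1/q))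
    simpa [pow_succ, mul_comm, mul_assoc, mul_left_comm] using this
  refine Summable.of_abs (hs.of_nonneg_of_le (fun k => abs_nonneg _) (fun k => ?_))
  have h1 : |(-(q : ℝ)) ^ (k + 1)| = (q:ℝ) ^ (k+1) := by
    rw [abs_pow, abs_neg, abs_of_pos hq0]
  rw [abs_div, h1, div_pow, one_pow, mul_one_div, div_le_div_iff₀ (by positivity) (by positivity)]
  apply mul_le_mul_of_nonneg_right _ (by positivity)
  rw [abs_of_nonneg (by positivity)]
  exact_mod_cast (hi k).le


lemma nega_mem {q : ℕ} (hq : 1 < q) {i : ℕ → ℕ} (hi : ∀ k, i k < q) :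
    negaVal q i ∈ Set.Icc (-(q : ℝ) / ((q : ℝ) + 1)) (1 / ((q : ℝ) + 1)) := by
  have hq0 : (0:ℝ) < q := by positivity
  have hq1 : (1:ℝ) < q := by exact_mod_cast hq
  have hr : (0:ℝ) ≤ 1/q^2 := by positivity
  have hr1 : (1:ℝ)/q^2 < 1 := by
    rw [div_lt_one (by positivity)]; nlinarith
  have hgeo : ∑' k : ℕ, ((1:ℝ)/q^2)^k = ((1 : ℝ) - 1/(q:ℝ)^2)⁻¹ := tsum_geometric_of_lt_one hr hr1
  have hgs : Summable (fun k : ℕ => ((1:ℝ)/q^2)^k) := summable_geometric_of_lt_one hr hr1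
  set f : ℕ → ℝ := fun k => (i k : ℝ) / (-(q : ℝ)) ^ (k + 1) with hf
  have hsum := nega_summable hq hi
  have hse : Summable (fun k : ℕ => f (2*k)) := hsum.comp_injective (fun a b => by omega)
  have hso : Summable (fun k : ℕ => f (2*k+1)) := hsum.comp_injective (fun a b => by omega)
  have hsplit : (∑' k, f (2*k)) + (∑' k, f (2*k+1)) = negaVal q i := tsum_even_add_odd hse hso
  -- pointwise formulas
  have hfe : ∀ k : ℕ, f (2*k) = -((i (2*k) : ℝ) / q^(2*k+1)) := by
    intro k
    have : (-(q:ℝ))^(2*k+1) = -((q:ℝ)^(2*k+1)) := Odd.neg_pow ⟨k, by ring⟩ _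
    rw [hf]; simp only [this, div_neg]
  have hfo : ∀ k : ℕ, f (2*k+1) = (i (2*k+1) : ℝ) / q^(2*k+2) := by
    intro k
    have : (-(q:ℝ))^(2*k+1+1) = (q:ℝ)^(2*k+2) := Even.neg_pow ⟨k+1, by ring⟩ _
    rw [hf]; simp only [this]
  have hd : ∀ k : ℕ, (i k : ℝ) ≤ (q:ℝ) - 1 := by
    intro k
    have := hi k
    have : (i k : ℝ) + 1 ≤ q := by exact_mod_cast this
    linarith
  have key1 : ∀ k : ℕ, ((q:ℝ)-1)/q * (1/q^2)^k = ((q:ℝ)-1)/q^(2*k+1) := by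
    intro k
    rw [div_pow, one_pow, ← pow_mul, div_mul_div_comm, mul_one]
    congr 1
    rw [← pow_succ']
  have key2 : ∀ k : ℕ, ((q:ℝ)-1)/q^2 * (1/q^2)^k = ((q:ℝ)-1)/q^(2*k+2) := by
    intro k
    rw [div_pow, one_pow, ← pow_mul, div_mul_div_comm, mul_one, ← pow_add]
    congr 2
    omega
  have hbound1 : ∀ k : ℕ, -(((q:ℝ)-1)/q * (1/q^2)^k) ≤ f (2*k) := by
    intro k
    rw [hfe k, key1 k, neg_le_neg_iff]
    gcongr
    exact hd _
  have hbound2 : ∀ k : ℕ, f (2*k+1) ≤ ((q:ℝ)-1)/q^2 * (1/q^2)^k := by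
    intro k
    rw [hfo k, key2 k]
    gcongr
    exact hd _
  have hne1 : (q:ℝ) ≠ 0 := ne_of_gt hq0
  have hne2 : (q:ℝ) + 1 ≠ 0 := by positivity
  have hne3 : (q:ℝ)^2 - 1 ≠ 0 := by nlinarith
  have h1 : (1:ℝ) - 1/(q:ℝ)^2 = ((q:ℝ)^2-1)/q^2 := by field_simp
  have hA : ∑' k : ℕ, (((q:ℝ)-1)/q * (1/q^2)^k) = (q:ℝ)/(q+1) := by
    rw [tsum_mul_left, hgeo, h1, inv_div]
    field_simp
    ring
  have hB : ∑' k : ℕ, (((q:ℝ)-1)/q^2 * (1/q^2)^k) = 1/((q:ℝ)+1) := by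
    rw [tsum_mul_left, hgeo, h1, inv_div]
    field_simp
    ring
  have he_lb : -((q:ℝ)/(q+1)) ≤ ∑' k, f (2*k) := by
    rw [← hA, ← tsum_neg]
    exact Summable.tsum_le_tsum hbound1 ((hgs.mul_left _).neg) hse
  have he_ub : (∑' k, f (2*k)) ≤ 0 := tsum_nonpos (fun k => by rw [hfe k]; exact neg_nonpos.2 (by positivity))
  have ho_lb : (0:ℝ) ≤ ∑' k, f (2*k+1) := tsum_nonneg (fun k => by rw [hfo k]; positivity)
  have ho_ub : (∑' k, f (2*k+1)) ≤ 1/((q:ℝ)+1) := by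
    rw [← hB]
    exact Summable.tsum_le_tsum hbound2 hso (hgs.mul_left _)
  constructor
  · rw [← hsplit]
    have : -(q : ℝ) / ((q:ℝ)+1) = -((q:ℝ)/(q+1)) + 0 := by ring
    rw [this]; exact add_le_add he_lb ho_lb
  · rw [← hsplit]
    have : (1:ℝ) / ((q:ℝ)+1) = 0 + 1/((q:ℝ)+1) := by ring
    rw [this]; exact add_le_add he_ub ho_ub


set_option maxHeartbeats 1000000 in
lemma nega_split {q : ℕ} (hq : 1 < q) {i : ℕ → ℕ} (hi : ∀ k, i k < q) (r : ℕ) :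
    negaVal q i = pref q i r + ((-(q : ℝ)) ^ r)⁻¹ * negaVal q (fun k => i (k + r)) := by
  have hq0 : (0:ℝ) < q := by positivity
  have hqne : (-(q:ℝ)) ≠ 0 := by simp [ne_of_gt hq0]
  have hsum := nega_summable hq hi
  have htail : Summable (fun k : ℕ => (i (k + r) : ℝ) / (-(q : ℝ)) ^ (k + r + 1)) :=
    (summable_nat_add_iff r).2 hsum
  have hsplit := Summable.sum_add_tsum_nat_add' (f := fun k : ℕ => (i k : ℝ) / (-(q : ℝ)) ^ (k + 1)) (k := r) htail
  rw [negaVal, ← hsplit, pref]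
  congr 1
  rw [negaVal, ← tsum_mul_left]
  apply tsum_congr
  intro k
  rw [inv_mul_eq_div, div_div, ← pow_add]
  have h : k + 1 + r = k + r + 1 := by omega
  rw [h]

lemma zpre_cast {q : ℕ} (hq : 1 < q) (i : ℕ → ℕ) (r : ℕ) :
    (zpre q i r : ℝ) = pref q i r * (-(q : ℝ)) ^ r := by
  have hq0 : (0:ℝ) < q := by positivity
  have hqne : (-(q:ℝ)) ≠ 0 := by simp [ne_of_gt hq0]
  rw [zpre, pref, sum_mul]
  push_cast
  apply Finset.sum_congr rfl
  intro k hk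
  rw [mem_range] at hk
  have hdecomp : r = (k + 1) + (r - 1 - k) := by omega
  rw [div_mul_eq_mul_div, eq_div_iff (pow_ne_zero _ hqne), mul_assoc, ← pow_add]
  congr 2
  omega

lemma zpre_rec (q : ℕ) (i : ℕ → ℕ) (r : ℕ) :
    zpre q i (r + 1) = (i r : ℤ) + (-(q : ℤ)) * zpre q i r := by
  rw [zpre, zpre, Finset.sum_range_succ, Finset.mul_sum]
  have h1 : (r + 1) - 1 - r = 0 := by omega
  rw [h1, pow_zero, mul_one, add_comm]
  congr 1
  apply Finset.sum_congr rfl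
  intro k hk
  rw [mem_range] at hk
  have h2 : (r + 1) - 1 - k = (r - 1 - k) + 1 := by omega
  rw [h2, pow_succ]
  ring

lemma zpre_inj {q : ℕ} (hq : 1 < q) {i j : ℕ → ℕ} (hi : ∀ k, i k < q) (hj : ∀ k, j k < q) :
    ∀ r : ℕ, zpre q i r = zpre q j r → ∀ k < r, i k = j k := by
  intro r
  induction r with
  | zero => intro _ k hk; omega
  | succ r ih =>
    intro h k hk
    rw [zpre_rec, zpre_rec] at h
    have hdvd : (q:ℤ) ∣ ((i r : ℤ) - (j r : ℤ)) := by
      refine ⟨zpre q i r - zpre q j r, ?_⟩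
      linarith [h]
    have habs : |((i r : ℤ) - (j r : ℤ))| < q := by
      have h1 : (i r : ℤ) < q := by exact_mod_cast hi r
      have h2 : (j r : ℤ) < q := by exact_mod_cast hj r
      rw [abs_lt]; constructor <;> omega
    have hr : (i r : ℤ) = (j r : ℤ) := by
      have := Int.eq_zero_of_abs_lt_dvd hdvd habs
      omega
    have hz : zpre q i r = zpre q j r := by
      have hqne : (-(q:ℤ)) ≠ 0 := by omega
      have : (-(q:ℤ)) * zpre q i r = (-(q:ℤ)) * zpre q j r := by linarith
      exact mul_left_cancel₀ hqne this
    rcases Nat.lt_succ_iff_lt_or_eq.1 hk with h' | h'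
    · exact ih hz k h'
    · subst h'; exact_mod_cast hr


lemma salem_cyl (q : ℕ) (p : ℕ → ℝ) (r : ℕ) (c : ℕ → ℕ)
    (hc : ∃ m < r, ddP q p (c m) (m + 1) = 0) :
    ∀ i j : ℕ → ℕ, (∀ m < r, i m = c m) → (∀ m < r, j m = c m) →
      salemId q p i = salemId q p j := by
  obtain ⟨m, hmr, hm0⟩ := hc
  have key : ∀ i : ℕ → ℕ, (∀ m' < r, i m' = c m') → ∀ k : ℕ,
      ddBeta q p (i k) (k + 1) * ∏ r' ∈ Finset.range k, ddP q p (i r') (r' + 1)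
        = if k ≤ m then ddBeta q p (c k) (k + 1) * ∏ r' ∈ Finset.range k, ddP q p (c r') (r' + 1)
          else 0 := by
    intro i hi k
    by_cases hk : k ≤ m
    · rw [if_pos hk, hi k (by omega)]
      congr 1
      apply Finset.prod_congr rfl
      intro r' hr'
      rw [mem_range] at hr'
      rw [hi r' (by omega)]
    · rw [if_neg hk]
      have hmem : m ∈ Finset.range k := mem_range.2 (by omega)
      have : (∏ r' ∈ Finset.range k, ddP q p (i r') (r' + 1)) = 0 := by
        apply Finset.prod_eq_zero hmem
        rw [hi m hmr]
        exact hm0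
      rw [this, mul_zero]
  intro i j hi hj
  rw [salemId, salemId]
  apply tsum_congr
  intro k
  rw [key i hi k, key j hj k]


-- tail is small
lemma tail_abs_le {q : ℕ} (hq : 1 < q) {i : ℕ → ℕ} (hi : ∀ k, i k < q) (r : ℕ) :
    |negaVal q i - pref q i r| ≤ ((1:ℝ)/q) ^ r := by
  have hq0 : (0:ℝ) < q := by positivity
  have hq1 : (1:ℝ) < q := by exact_mod_cast hq
  have hv := nega_mem hq (i := fun k => i (k + r)) (fun k => hi _)
  set v := negaVal q (fun k => i (k + r)) with hvdef
  have habs : |v| ≤ 1 := by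
    rw [abs_le]
    obtain ⟨h1, h2⟩ := hv
    constructor
    · have : -(q:ℝ)/((q:ℝ)+1) ≥ -1 := by
        rw [ge_iff_le, neg_le, neg_div, neg_neg, div_le_one (by positivity)]
        linarith
      linarith
    · have : (1:ℝ)/((q:ℝ)+1) ≤ 1 := by
        rw [div_le_one (by positivity)]; linarith
      linarith
  rw [nega_split hq hi r]
  have : pref q i r + ((-(q:ℝ)) ^ r)⁻¹ * v - pref q i r = ((-(q:ℝ)) ^ r)⁻¹ * v := by ring
  rw [this, abs_mul, abs_inv, abs_pow, abs_neg, abs_of_pos hq0]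
  calc ((q:ℝ) ^ r)⁻¹ * |v| ≤ ((q:ℝ) ^ r)⁻¹ * 1 := by
        apply mul_le_mul_of_nonneg_left habs (by positivity)
    _ = ((1:ℝ)/q) ^ r := by rw [mul_one, one_div, inv_pow]

lemma bad_null {q : ℕ} (hq : 1 < q) (a : ℕ → ℕ) (ha : ∀ m, a m < q) (D : ℝ → ℕ → ℕ)
    (hD : ∀ x ∈ Set.Icc (-(q : ℝ) / ((q : ℝ) + 1)) (1 / ((q : ℝ) + 1)),
      (∀ k, D x k < q) ∧ negaVal q (D x) = x) :
    volume {x | x ∈ Set.Icc (-(q : ℝ) / ((q : ℝ) + 1)) (1 / ((q : ℝ) + 1)) ∧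
      ∀ m, D x m ≠ a m} = 0 := by
  have hq0 : (0:ℝ) < q := by positivity
  have hq1 : (1:ℝ) < q := by exact_mod_cast hq
  set Bad := {x | x ∈ Set.Icc (-(q : ℝ) / ((q : ℝ) + 1)) (1 / ((q : ℝ) + 1)) ∧
      ∀ m, D x m ≠ a m} with hBad
  have hN : ∀ N : ℕ, volume Bad ≤ ENNReal.ofReal (2 * (((q:ℝ)-1)/q)^N) := by
    intro N
    set s : ℝ := ((1:ℝ)/q) ^ N with hs
    have hs0 : 0 < s := by positivity
    set S := Fintype.piFinset (fun k : Fin N => Finset.univ.erase (⟨a k, ha k⟩ : Fin q)) with hS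
    set ext : (Fin N → Fin q) → (ℕ → ℕ) := fun c k => if h : k < N then (c ⟨k, h⟩ : ℕ) else 0
      with hext
    have hcover : Bad ⊆ ⋃ c ∈ S, Set.Icc (pref q (ext c) N - s) (pref q (ext c) N + s) := by
      intro x hx
      obtain ⟨hxI, hxa⟩ := hx
      obtain ⟨hd, hval⟩ := hD x hxI
      set c : Fin N → Fin q := fun k => ⟨D x k, hd k⟩ with hc
      have hcS : c ∈ S := by
        rw [hS, Fintype.mem_piFinset]
        intro k
        rw [Finset.mem_erase]
        refine ⟨?_, Finset.mem_univ _⟩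
        intro hcontra
        exact hxa k (by simpa using congrArg Fin.val hcontra)
      have hprefeq : pref q (ext c) N = pref q (D x) N := by
        apply Finset.sum_congr rfl
        intro k hk
        rw [mem_range] at hk
        rw [hext]
        simp only [hk, dif_pos]
        rfl
      have habs : |x - pref q (D x) N| ≤ s := by
        have h := tail_abs_le hq hd N
        rw [hval] at h
        exact h
      refine Set.mem_biUnion hcS ?_
      rw [hprefeq]
      rw [Set.mem_Icc]
      rw [abs_le] at habs
      constructor <;> linarith [habs.1, habs.2]
    calc volume Bad ≤ volume (⋃ c ∈ S, Set.Icc (pref q (ext c) N - s) (pref q (ext c) N + s)) :=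
          measure_mono hcover
      _ ≤ ∑ c ∈ S, volume (Set.Icc (pref q (ext c) N - s) (pref q (ext c) N + s)) :=
          measure_biUnion_finset_le _ _
      _ = ∑ c ∈ S, ENNReal.ofReal (2 * s) := by
          apply Finset.sum_congr rfl
          intro c _
          rw [Real.volume_Icc]
          congr 1
          ring
      _ = (S.card : ℝ≥0∞) * ENNReal.ofReal (2 * s) := by
          rw [Finset.sum_const, nsmul_eq_mul]
      _ ≤ ENNReal.ofReal (2 * (((q:ℝ)-1)/q)^N) := by
          have hcard : S.card = (q - 1) ^ N := by
            rw [hS, Fintype.card_piFinset]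
            have : ∀ k : Fin N, (Finset.univ.erase (⟨a k, ha k⟩ : Fin q)).card = q - 1 := by
              intro k
              rw [Finset.card_erase_of_mem (Finset.mem_univ _), Finset.card_univ,
                Fintype.card_fin]
            rw [Finset.prod_congr rfl (fun k _ => this k), Finset.prod_const, Finset.card_univ,
              Fintype.card_fin]
          rw [hcard, ← ENNReal.ofReal_natCast, ← ENNReal.ofReal_mul (by positivity)]
          apply ENNReal.ofReal_le_ofReal
          have hcast : (((q - 1 : ℕ) ^ N : ℕ) : ℝ) = ((q:ℝ) - 1) ^ N := by
            push_cast [Nat.cast_sub hq.le]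
            ring
          apply le_of_eq
          rw [hcast, hs, div_pow, div_pow]
          field_simp
          ring
  have htend : Filter.Tendsto (fun N : ℕ => ENNReal.ofReal (2 * (((q:ℝ)-1)/q)^N))
      Filter.atTop (nhds 0) := by
    have h1 : Filter.Tendsto (fun N : ℕ => (((q:ℝ)-1)/q)^N) Filter.atTop (nhds 0) := by
      apply tendsto_pow_atTop_nhds_zero_of_lt_one
      · apply div_nonneg <;> linarith
      · rw [div_lt_one hq0]; linarith
    have h2 : Filter.Tendsto (fun N : ℕ => 2 * (((q:ℝ)-1)/q)^N) Filter.atTop (nhds 0) := by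
      simpa using h1.const_mul 2
    have := (ENNReal.continuous_ofReal.tendsto 0).comp h2
    rw [ENNReal.ofReal_zero] at this
    exact this
  have : volume Bad ≤ 0 := ge_of_tendsto' htend hN
  exact le_antisymm this (zero_le)


noncomputable def ESet (q : ℕ) : Set ℝ :=
  ⋃ (r : ℕ) (n : ℤ), ({((n : ℝ) - (q : ℝ) / ((q : ℝ) + 1)) / (-(q : ℝ)) ^ r,
      ((n : ℝ) + 1 / ((q : ℝ) + 1)) / (-(q : ℝ)) ^ r} : Set ℝ)

lemma ESet_null (q : ℕ) : volume (ESet q) = 0 := by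
  apply Set.Countable.measure_zero
  apply Set.countable_iUnion
  intro r
  apply Set.countable_iUnion
  intro n
  exact (Set.countable_singleton _).insert _

lemma eps_lemma {q : ℕ} (hq : 1 < q) (p : ℕ → ℝ) (D : ℝ → ℕ → ℕ)
    (hD : ∀ x ∈ Set.Icc (-(q : ℝ) / ((q : ℝ) + 1)) (1 / ((q : ℝ) + 1)),
      (∀ k, D x k < q) ∧ negaVal q (D x) = x)
    (x : ℝ) (hxI : x ∈ Set.Icc (-(q : ℝ) / ((q : ℝ) + 1)) (1 / ((q : ℝ) + 1)))
    (hxE : x ∉ ESet q) (m : ℕ) (hm : ddP q p (D x m) (m + 1) = 0) :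
    ∃ ε > (0 : ℝ), ∀ y ∈ Set.Icc (-(q : ℝ) / ((q : ℝ) + 1)) (1 / ((q : ℝ) + 1)),
      |y - x| < ε → salemId q p (D y) = salemId q p (D x) := by
  have hq0 : (0:ℝ) < q := by positivity
  have hq1 : (1:ℝ) < q := by exact_mod_cast hq
  set r := m + 1 with hr
  obtain ⟨hdx, hvx⟩ := hD x hxI
  have hqrne : ((-(q:ℝ)) ^ r) ≠ 0 := by
    apply pow_ne_zero; simp only [ne_eq, neg_eq_zero]; exact ne_of_gt hq0
  set vx : ℝ := negaVal q (fun k => D x (k + r)) with hvxdef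
  set P : ℝ := pref q (D x) r with hP
  have hsplitx : x = P + ((-(q:ℝ)) ^ r)⁻¹ * vx := by
    have h := nega_split hq hdx r
    rw [hvx] at h
    exact h
  have hvxI : vx ∈ Set.Icc (-(q : ℝ) / ((q : ℝ) + 1)) (1 / ((q : ℝ) + 1)) :=
    nega_mem hq (fun k => hdx _)
  have hzc : ((zpre q (D x) r : ℤ) : ℝ) = P * (-(q:ℝ)) ^ r := zpre_cast hq (D x) r
  have hxz : x * (-(q:ℝ)) ^ r = ((zpre q (D x) r : ℤ) : ℝ) + vx := by
    rw [hzc, hsplitx]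
    field_simp
  have hlow : -(q : ℝ) / ((q : ℝ) + 1) < vx := by
    rcases lt_or_eq_of_le hvxI.1 with h | h
    · exact h
    · exfalso
      apply hxE
      refine Set.mem_iUnion.2 ⟨r, Set.mem_iUnion.2 ⟨zpre q (D x) r, ?_⟩⟩
      rw [Set.mem_insert_iff, Set.mem_singleton_iff]
      left
      rw [eq_div_iff hqrne, neg_div] at *
      linarith [hxz, h]
  have hhigh : vx < 1 / ((q : ℝ) + 1) := by
    rcases lt_or_eq_of_le hvxI.2 with h | h
    · exact h
    · exfalso
      apply hxE
      refine Set.mem_iUnion.2 ⟨r, Set.mem_iUnion.2 ⟨zpre q (D x) r, ?_⟩⟩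
      rw [Set.mem_insert_iff, Set.mem_singleton_iff]
      right
      rw [eq_div_iff hqrne]
      linarith [hxz, h]
  rw [neg_div] at hlow
  set a := vx + (q : ℝ) / ((q : ℝ) + 1) with ha
  set b := 1 / ((q : ℝ) + 1) - vx with hb
  have ha0 : 0 < a := by rw [ha]; linarith
  have hb0 : 0 < b := by rw [hb]; linarith
  have hab : a + b = 1 := by
    rw [ha, hb]
    field_simp
    ring
  clear_value vx P a b
  set ε := ((q:ℝ) ^ r)⁻¹ * min a b with he
  have hε0 : 0 < ε := by
    rw [he]
    exact mul_pos (by positivity) (lt_min ha0 hb0)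
  refine ⟨ε, hε0, ?_⟩
  intro y hyI hyx
  obtain ⟨hdy, hvy⟩ := hD y hyI
  set vy : ℝ := negaVal q (fun k => D y (k + r)) with hvydef
  set Py : ℝ := pref q (D y) r with hPy
  have hsplity : y = Py + ((-(q:ℝ)) ^ r)⁻¹ * vy := by
    have h := nega_split hq hdy r
    rw [hvy] at h
    exact h
  have hvyI : vy ∈ Set.Icc (-(q : ℝ) / ((q : ℝ) + 1)) (1 / ((q : ℝ) + 1)) :=
    nega_mem hq (fun k => hdy _)
  have hzcy : ((zpre q (D y) r : ℤ) : ℝ) = Py * (-(q:ℝ)) ^ r := zpre_cast hq (D y) r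
  clear_value vy Py
  have hvy1 := hvyI.1
  rw [neg_div] at hvy1
  have hvdiff : |vy - vx| ≤ 1 - min a b := by
    rw [abs_le]
    constructor
    · linarith [hvy1, min_le_right a b, hab, ha]
    · linarith [hvyI.2, min_le_left a b, hab, hb]
  have habsinv : |((-(q:ℝ)) ^ r)⁻¹| = ((q:ℝ) ^ r)⁻¹ := by
    rw [abs_inv, abs_pow, abs_neg, abs_of_pos hq0]
  have hdiff : |Py - P| < ((q:ℝ) ^ r)⁻¹ := by
    have heq : Py - P = (y - x) - ((-(q:ℝ)) ^ r)⁻¹ * (vy - vx) := by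
      rw [hsplitx, hsplity]; ring
    rw [heq]
    calc |(y - x) - ((-(q:ℝ)) ^ r)⁻¹ * (vy - vx)|
        ≤ |y - x| + |((-(q:ℝ)) ^ r)⁻¹ * (vy - vx)| := abs_sub _ _
      _ = |y - x| + ((q:ℝ) ^ r)⁻¹ * |vy - vx| := by rw [abs_mul, habsinv]
      _ < ε + ((q:ℝ) ^ r)⁻¹ * (1 - min a b) := by
          apply add_lt_add_of_lt_of_le hyx
          exact mul_le_mul_of_nonneg_left hvdiff (by positivity)
      _ = ((q:ℝ) ^ r)⁻¹ := by rw [he]; ring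
  have hzeq : zpre q (D y) r = zpre q (D x) r := by
    have hcast : |((zpre q (D y) r - zpre q (D x) r : ℤ) : ℝ)| < 1 := by
      push_cast
      rw [hzcy, hzc, ← sub_mul, abs_mul, abs_pow, abs_neg, abs_of_pos hq0]
      calc |Py - P| * (q:ℝ) ^ r < ((q:ℝ) ^ r)⁻¹ * (q:ℝ) ^ r := by
            apply mul_lt_mul_of_pos_right hdiff (by positivity)
        _ = 1 := by field_simp
    have h1 : |zpre q (D y) r - zpre q (D x) r| < 1 := by
      rw [← Int.cast_abs] at hcast
      exact_mod_cast hcast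
    have h2 := abs_lt.1 h1
    omega
  have hdigits : ∀ m' < r, D y m' = D x m' := zpre_inj hq hdy hdx r hzeq
  exact salem_cyl q p r (D x) ⟨m, by omega, hm⟩ (D y) (D x) hdigits (fun _ _ => rfl)


/-- If some `p_{j₀} = 0`, the Salem function is constant on every cylinder whose
base contains a digit `c_m` with `p̈_{c_m} = 0`, and (realized on the reals via any
choice `D` of nega-`q` representations) is locally constant almost everywhere on
`[−q/(q+1), 1/(q+1)]`. -/
theorem salem_constant_ae_when_some_p_zero
    (q : ℕ) (hq : 1 < q) (p : ℕ → ℝ)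
    (hp : ∀ j < q, p j ∈ Set.Icc (0 : ℝ) 1)
    (hps : ∑ j ∈ Finset.range q, p j = 1)
    (hzero : ∃ j₀ < q, p j₀ = 0)
    (D : ℝ → ℕ → ℕ)
    (hD : ∀ x ∈ Set.Icc (-(q : ℝ) / ((q : ℝ) + 1)) (1 / ((q : ℝ) + 1)),
      (∀ k, D x k < q) ∧ negaVal q (D x) = x) :
    (∀ (r : ℕ) (c : ℕ → ℕ), (∀ m < r, c m < q) →
      (∃ m < r, ddP q p (c m) (m + 1) = 0) →
      ∀ i j : ℕ → ℕ, (∀ k, i k < q) → (∀ k, j k < q) →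
        (∀ m < r, i m = c m) → (∀ m < r, j m = c m) →
        salemId q p i = salemId q p j) ∧
    (∀ᵐ x ∂(volume.restrict (Set.Icc (-(q : ℝ) / ((q : ℝ) + 1)) (1 / ((q : ℝ) + 1)))),
      ∃ ε > (0 : ℝ), ∀ y ∈ Set.Icc (-(q : ℝ) / ((q : ℝ) + 1)) (1 / ((q : ℝ) + 1)),
        |y - x| < ε → salemId q p (D y) = salemId q p (D x)) := by
  obtain ⟨j₀, hj₀, hpj₀⟩ := hzero
  constructor
  · intro r c hcq hc i j hi hj hic hjc
    exact salem_cyl q p r c hc i j hic hjc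
  · set I := Set.Icc (-(q : ℝ) / ((q : ℝ) + 1)) (1 / ((q : ℝ) + 1)) with hI
    set aDig : ℕ → ℕ := fun m => if Even (m + 1) then j₀ else q - 1 - j₀ with haDig
    have haq : ∀ m, aDig m < q := by
      intro m
      rw [haDig]
      dsimp only
      split <;> omega
    have hddP0 : ∀ m, ddP q p (aDig m) (m + 1) = 0 := by
      intro m
      rw [haDig]
      dsimp only
      by_cases hpar : Even (m + 1)
      · rw [if_pos hpar, ddP, if_pos hpar]
        exact hpj₀
      · rw [if_neg hpar, ddP, if_neg hpar]
        have h : q - 1 - (q - 1 - j₀) = j₀ := by omega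
        rw [h]
        exact hpj₀
    have hBad0 : volume {x | x ∈ I ∧ ∀ m, D x m ≠ aDig m} = 0 := bad_null hq aDig haq D hD
    have hE0 : volume (ESet q) = 0 := ESet_null q
    rw [ae_iff]
    set BadS := {x | x ∈ I ∧ ∀ m, D x m ≠ aDig m} with hBadS
    have hsub : {x | ¬ (∃ ε > (0:ℝ), ∀ y ∈ I, |y - x| < ε →
        salemId q p (D y) = salemId q p (D x))} ⊆ (BadS ∪ ESet q) ∪ Iᶜ := by
      intro x hx
      by_cases hxI : x ∈ I
      · by_cases hxE : x ∈ ESet q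
        · exact Or.inl (Or.inr hxE)
        · refine Or.inl (Or.inl ⟨hxI, fun m hcontra => ?_⟩)
          exact hx (eps_lemma hq p D hD x hxI hxE m (by rw [hcontra]; exact hddP0 m))
      · exact Or.inr hxI
    have hle : (volume.restrict I) {x | ¬ (∃ ε > (0:ℝ), ∀ y ∈ I, |y - x| < ε →
        salemId q p (D y) = salemId q p (D x))} ≤ 0 := by
      calc (volume.restrict I) {x | ¬ (∃ ε > (0:ℝ), ∀ y ∈ I, |y - x| < ε →
              salemId q p (D y) = salemId q p (D x))}
          ≤ (volume.restrict I) ((BadS ∪ ESet q) ∪ Iᶜ) := measure_mono hsub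
        _ ≤ (volume.restrict I) (BadS ∪ ESet q) + (volume.restrict I) Iᶜ :=
            measure_union_le _ _
        _ ≤ ((volume.restrict I) BadS + (volume.restrict I) (ESet q))
            + (volume.restrict I) Iᶜ := by
            exact add_le_add_left (measure_union_le _ _) _
        _ ≤ (volume BadS + volume (ESet q)) + (volume.restrict I) Iᶜ := by
            exact add_le_add_left (add_le_add (Measure.restrict_apply_le _ _)
              (Measure.restrict_apply_le _ _)) _
        _ = (volume.restrict I) Iᶜ := by rw [hBad0, hE0]; simp
        _ = 0 := by
            rw [Measure.restrict_apply (measurableSet_Icc.compl), Set.compl_inter_self]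
            exact measure_empty
    exact le_antisymm hle (zero_le)
end
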